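/- Fix disjoint finite sets S, P and a subspace T of ℂ^{S⊎P}. Let A ⊆ ℂ^S × ℂ^S be an affine space with vector space translate V, and suppose the port behaviour B(A) is nonempty, so that B(A) is an affine space with vector space translate B(V). Then the port behaviour of the adjoint device characteristic equals the adjoint of this translate: B(V^adj) = (B(V))^adj, where the adjoint on the right is taken in ℂ^P × ℂ^P. -/

import Mathlib

/-!
STATEMENT 8: Fix disjoint finite sets S, P and a subspace T of ℂ^{S⊎P}. Let
A ⊆ ℂ^S × ℂ^S be an affine space with vector space translate V, and suppose the port
behaviour B(A) is nonempty (so that B(A) is an affine space with vector space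
translate B(V)). Then the port behaviour of the adjoint device characteristic equals
the adjoint of this translate: B(V^adj) = (B(V))^adj, the adjoint on the right being
taken in ℂ^P × ℂ^P.
-/

/-- Hermitian inner product on `ℂ^X`: `⟨f,g⟩ = Σ_e f e * conj (g e)`. -/
noncomputable def hinner {X : Type*} [Fintype X] (f g : X → ℂ) : ℂ :=
  ∑ e, f e * (starRingEnd ℂ) (g e)

/-- Orthogonal complement (as a set) in `ℂ^X × ℂ^Y` with inner product
`⟨(f₁,f₂),(g₁,g₂)⟩ = ⟨f₁,g₁⟩ + ⟨f₂,g₂⟩`. -/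
def pperp {X Y : Type*} [Fintype X] [Fintype Y] (K : Set ((X → ℂ) × (Y → ℂ))) :
    Set ((X → ℂ) × (Y → ℂ)) :=
  {g | ∀ f ∈ K, hinner f.1 g.1 + hinner f.2 g.2 = 0}

/-- Adjoint of a collection of voltage-current pairs:
`K^adj := {(v,i) : (−i,v) ∈ K^⊥}`. -/
def adjSet {X : Type*} [Fintype X] (K : Set ((X → ℂ) × (X → ℂ))) :
    Set ((X → ℂ) × (X → ℂ)) :=
  {w | (-w.2, w.1) ∈ pperp K}

/-- The port behaviour of a device characteristic `K ⊆ ℂ^S × ℂ^S` relative to the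
KVL space `T ⊆ ℂ^{S⊎P}` (with KCL space `T^⊥`). -/
def portB {S P : Type*} [Fintype S] [Fintype P]
    (T : Submodule ℂ ((S → ℂ) × (P → ℂ))) (K : Set ((S → ℂ) × (S → ℂ))) :
    Set ((P → ℂ) × (P → ℂ)) :=
  {w | ∃ (vS iS : S → ℂ) (vP iP : P → ℂ),
      (vS, iS) ∈ K ∧ (vS, vP) ∈ T ∧
      (iS, iP) ∈ pperp (T : Set ((S → ℂ) × (P → ℂ))) ∧ w = (vP, -iP)}

namespace S8

variable {X Y Z : Type*} [Fintype X] [Fintype Y] [Fintype Z]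


lemma hinner_add_left (f g h : Z → ℂ) : hinner (f + g) h = hinner f h + hinner g h := by
  simp [hinner, add_mul, Finset.sum_add_distrib]

lemma hinner_smul_left (c : ℂ) (f g : Z → ℂ) : hinner (c • f) g = c * hinner f g := by
  simp [hinner, Finset.mul_sum, mul_assoc]

lemma hinner_neg_left (f g : Z → ℂ) : hinner (-f) g = -hinner f g := by
  simp [hinner, Finset.sum_neg_distrib]

lemma hinner_zero_left (g : Z → ℂ) : hinner 0 g = 0 := by simp [hinner]

lemma hinner_add_right (f g h : Z → ℂ) : hinner f (g + h) = hinner f g + hinner f h := by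
  simp [hinner, mul_add, Finset.sum_add_distrib]

lemma hinner_smul_right (c : ℂ) (f g : Z → ℂ) :
    hinner f (c • g) = (starRingEnd ℂ) c * hinner f g := by
  simp [hinner, Finset.mul_sum]; ring_nf; simp [mul_comm, mul_left_comm]

lemma hinner_neg_right (f g : Z → ℂ) : hinner f (-g) = -hinner f g := by
  simp [hinner]

lemma hinner_zero_right (f : Z → ℂ) : hinner f 0 = 0 := by simp [hinner]

lemma hinner_self_eq_zero {f : Z → ℂ} (h : hinner f f = 0) : f = 0 := by
  have h2 : ((∑ e, Complex.normSq (f e) : ℝ) : ℂ) = 0 := by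
    rw [← h]; simp [hinner, Complex.mul_conj]
  have h3 : (∑ e, Complex.normSq (f e) : ℝ) = 0 := by exact_mod_cast h2
  funext e
  have := (Finset.sum_eq_zero_iff_of_nonneg (fun i _ => Complex.normSq_nonneg (f i))).1 h3 e
    (Finset.mem_univ e)
  exact Complex.normSq_eq_zero.mp this

lemma hinner_nondeg {g : Z → ℂ} (h : ∀ b : Z → ℂ, hinner b g = 0) : g = 0 :=
  hinner_self_eq_zero (h g)

lemma hinner_sum_split (a b : (X ⊕ Y) → ℂ) :
    hinner a b = hinner (a ∘ Sum.inl) (b ∘ Sum.inl) + hinner (a ∘ Sum.inr) (b ∘ Sum.inr) := by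
  simp [hinner, Fintype.sum_sum_type, Function.comp]

lemma hinner_elim (a c : X → ℂ) (b d : Y → ℂ) :
    hinner (Sum.elim a b) (Sum.elim c d) = hinner a c + hinner b d := by
  rw [hinner_sum_split]; rfl


/-! ### zperp -/

def zperp (K : Set (Z → ℂ)) : Set (Z → ℂ) := {g | ∀ f ∈ K, hinner f g = 0}

noncomputable def zperpSub (K : Submodule ℂ (Z → ℂ)) : Submodule ℂ (Z → ℂ) where
  carrier := zperp (K : Set (Z → ℂ))
  add_mem' := by
    intro a b ha hb f hf
    rw [hinner_add_right, ha f hf, hb f hf, add_zero]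
  zero_mem' := fun f _ => hinner_zero_right f
  smul_mem' := by
    intro c g hg f hf
    rw [hinner_smul_right, hg f hf, mul_zero]

lemma coe_zperpSub (K : Submodule ℂ (Z → ℂ)) :
    (zperpSub K : Set (Z → ℂ)) = zperp (K : Set (Z → ℂ)) := rfl

lemma zperp_eq_orth (K : Submodule ℂ (EuclideanSpace ℂ Z)) :
    zperp (WithLp.ofLp '' (K : Set (EuclideanSpace ℂ Z)))
      = WithLp.ofLp '' (Kᗮ : Set (EuclideanSpace ℂ Z)) := by
  have key : ∀ f g : EuclideanSpace ℂ Z,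
      (inner ℂ f g : ℂ) = (starRingEnd ℂ) (hinner f.ofLp g.ofLp) := by
    intro f g
    simp [hinner, PiLp.inner_apply, map_sum, mul_comm]
  ext g
  constructor
  · intro h
    refine ⟨WithLp.toLp 2 g, ?_, rfl⟩
    rw [SetLike.mem_coe, Submodule.mem_orthogonal]
    intro f hf
    rw [key, h f.ofLp ⟨f, hf, rfl⟩, map_zero]
  · rintro ⟨g', hg', rfl⟩ f ⟨f', hf', rfl⟩
    have := (Submodule.mem_orthogonal _ _).1 hg' f' hf'
    rw [key] at this
    simpa using congrArg (starRingEnd ℂ) this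

lemma zperp_zperp (K : Submodule ℂ (Z → ℂ)) :
    zperp (zperp (K : Set (Z → ℂ))) = (K : Set (Z → ℂ)) := by
  let K' : Submodule ℂ (EuclideanSpace ℂ Z) :=
    K.comap (WithLp.linearEquiv 2 ℂ (Z → ℂ)).toLinearMap
  have hK : WithLp.ofLp '' (K' : Set (EuclideanSpace ℂ Z)) = (K : Set (Z → ℂ)) := by
    ext f
    constructor
    · rintro ⟨f', hf', rfl⟩
      exact hf'
    · intro hf
      exact ⟨WithLp.toLp 2 f, hf, rfl⟩
  rw [← hK, zperp_eq_orth, zperp_eq_orth, K'.orthogonal_orthogonal]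

/-! ### pperp basics -/

lemma mem_pperp {K : Set ((X → ℂ) × (Y → ℂ))} {g} :
    g ∈ pperp K ↔ ∀ f ∈ K, hinner f.1 g.1 + hinner f.2 g.2 = 0 := Iff.rfl

noncomputable def pperpSub (K : Submodule ℂ ((X → ℂ) × (Y → ℂ))) :
    Submodule ℂ ((X → ℂ) × (Y → ℂ)) where
  carrier := pperp (K : Set _)
  add_mem' := by
    intro a b ha hb f hf
    have h1 := ha f hf; have h2 := hb f hf
    simp only [Prod.fst_add, Prod.snd_add, hinner_add_right]
    linear_combination h1 + h2
  zero_mem' := by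
    intro f _
    simp [hinner_zero_right]
  smul_mem' := by
    intro c g hg f hf
    have := hg f hf
    simp only [Prod.smul_fst, Prod.smul_snd, hinner_smul_right]
    linear_combination (starRingEnd ℂ) c * this

lemma coe_pperpSub (K : Submodule ℂ ((X → ℂ) × (Y → ℂ))) :
    (pperpSub K : Set ((X → ℂ) × (Y → ℂ))) = pperp (K : Set ((X → ℂ) × (Y → ℂ))) := rfl

/-- glue equivalence -/
noncomputable def glE (X Y : Type*) [Fintype X] [Fintype Y] :
    ((X ⊕ Y) → ℂ) ≃ₗ[ℂ] ((X → ℂ) × (Y → ℂ)) where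
  toFun f := (f ∘ Sum.inl, f ∘ Sum.inr)
  invFun p := Sum.elim p.1 p.2
  map_add' f g := rfl
  map_smul' c f := rfl
  left_inv f := by funext e; cases e <;> rfl
  right_inv p := rfl

lemma glE_apply (f : (X ⊕ Y) → ℂ) : glE X Y f = (f ∘ Sum.inl, f ∘ Sum.inr) := rfl

lemma hinner2_glE (a b : (X ⊕ Y) → ℂ) :
    hinner ((glE X Y a).1) ((glE X Y b).1) + hinner ((glE X Y a).2) ((glE X Y b).2)
      = hinner a b := by
  have ha : a = Sum.elim (a ∘ Sum.inl) (a ∘ Sum.inr) := by funext e; cases e <;> rfl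
  have hb : b = Sum.elim (b ∘ Sum.inl) (b ∘ Sum.inr) := by funext e; cases e <;> rfl
  conv_rhs => rw [ha, hb]
  rw [hinner_elim]; rfl

lemma mem_pperp_glE (K : Set ((X → ℂ) × (Y → ℂ))) (g : (X → ℂ) × (Y → ℂ)) :
    g ∈ pperp K ↔ (glE X Y).symm g ∈ zperp ((glE X Y) ⁻¹' K) := by
  constructor
  · intro hg f hf
    have h2 := hg _ hf
    rw [← hinner2_glE f ((glE X Y).symm g)]
    simpa [(glE X Y).apply_symm_apply] using h2
  · intro hg f hf
    have hmem : (glE X Y).symm f ∈ (glE X Y) ⁻¹' K := by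
      simpa [(glE X Y).apply_symm_apply] using hf
    have h2 := hg _ hmem
    rw [← hinner2_glE ((glE X Y).symm f) ((glE X Y).symm g)] at h2
    simpa [(glE X Y).apply_symm_apply] using h2

lemma pperp_eq_image (K : Set ((X → ℂ) × (Y → ℂ))) :
    pperp K = (glE X Y) '' zperp ((glE X Y) ⁻¹' K) := by
  ext g
  rw [mem_pperp_glE]
  constructor
  · intro h; exact ⟨_, h, (glE X Y).apply_symm_apply g⟩
  · rintro ⟨h, hh, rfl⟩; simpa [(glE X Y).symm_apply_apply] using hh

lemma pperp_pperp (K : Submodule ℂ ((X → ℂ) × (Y → ℂ))) :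
    pperp (pperp (K : Set ((X → ℂ) × (Y → ℂ)))) = (K : Set ((X → ℂ) × (Y → ℂ))) := by
  set K0 : Submodule ℂ ((X ⊕ Y) → ℂ) := K.comap ((glE X Y) : ((X ⊕ Y) → ℂ) →ₗ[ℂ] _)
    with hK0
  have hpre : (glE X Y) ⁻¹' (K : Set ((X → ℂ) × (Y → ℂ))) = (K0 : Set ((X ⊕ Y) → ℂ)) := rfl
  rw [pperp_eq_image, pperp_eq_image, hpre,
    Set.preimage_image_eq _ (glE X Y).injective, zperp_zperp, ← hpre,
    Set.image_preimage_eq _ (glE X Y).surjective]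


/-! ### adjSet machinery (on doubled spaces) -/

lemma mem_adjSet {K : Set ((Z → ℂ) × (Z → ℂ))} {w} :
    w ∈ adjSet K ↔ ∀ f ∈ K, hinner f.2 w.1 = hinner f.1 w.2 := by
  unfold adjSet pperp
  simp only [Set.mem_setOf_eq]
  constructor
  · intro h f hf
    have := h f hf
    rw [hinner_neg_right] at this
    linear_combination this
  · intro h f hf
    rw [hinner_neg_right, h f hf]
    ring

noncomputable def adjSub (K : Submodule ℂ ((Z → ℂ) × (Z → ℂ))) :
    Submodule ℂ ((Z → ℂ) × (Z → ℂ)) where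
  carrier := adjSet (K : Set _)
  add_mem' := by
    intro a b ha hb
    rw [mem_adjSet] at *
    intro f hf
    simp only [Prod.fst_add, Prod.snd_add, hinner_add_right, ha f hf, hb f hf]
  zero_mem' := by
    rw [mem_adjSet]
    intro f hf
    simp [hinner_zero_right]
  smul_mem' := by
    intro c w hw
    rw [mem_adjSet] at *
    intro f hf
    simp only [Prod.smul_fst, Prod.smul_snd, hinner_smul_right, hw f hf]

lemma coe_adjSub (K : Submodule ℂ ((Z → ℂ) × (Z → ℂ))) :
    (adjSub K : Set ((Z → ℂ) × (Z → ℂ))) = adjSet (K : Set ((Z → ℂ) × (Z → ℂ))) := rfl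

/-- rotation -/
noncomputable def RR (Z : Type*) [Fintype Z] :
    ((Z → ℂ) × (Z → ℂ)) ≃ₗ[ℂ] ((Z → ℂ) × (Z → ℂ)) where
  toFun w := (-w.2, w.1)
  invFun w := (w.2, -w.1)
  map_add' a b := by simp [Prod.ext_iff]; ring_nf
  map_smul' c a := by simp [Prod.ext_iff]
  left_inv w := by simp
  right_inv w := by simp

lemma adjSet_eq_preimage (K : Set ((Z → ℂ) × (Z → ℂ))) :
    adjSet K = (RR Z) ⁻¹' pperp K := rfl

lemma RRsymm_image_eq_preimage (M : Set ((Z → ℂ) × (Z → ℂ))) :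
    (RR Z).symm '' M = (RR Z) ⁻¹' M := by
  ext w
  constructor
  · rintro ⟨m, hm, rfl⟩
    simpa [(RR Z).apply_symm_apply] using hm
  · intro hw
    exact ⟨RR Z w, hw, (RR Z).symm_apply_apply w⟩

lemma mem_pperp_RRsymm_image (M : Set ((Z → ℂ) × (Z → ℂ))) (g) :
    g ∈ pperp ((RR Z).symm '' M) ↔ RR Z g ∈ pperp M := by
  unfold pperp
  simp only [Set.mem_setOf_eq]
  constructor
  · intro h f hf
    have := h ((RR Z).symm f) ⟨f, hf, rfl⟩
    -- (RR Z).symm f = (f.2, -f.1); RR Z g = (-g.2, g.1)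
    -- LHS: hinner f.2 g.1 + hinner (-f.1) g.2 ; goal: hinner f.1 (-g.2) + hinner f.2 g.1
    -- need identify components
    have e1 : ((RR Z).symm f).1 = f.2 := rfl
    have e2 : ((RR Z).symm f).2 = -f.1 := rfl
    rw [e1, e2, hinner_neg_left] at this
    have e3 : (RR Z g).1 = -g.2 := rfl
    have e4 : (RR Z g).2 = g.1 := rfl
    rw [e3, e4, hinner_neg_right]
    linear_combination this
  · rintro h f ⟨m, hm, rfl⟩
    have := h m hm
    have e1 : ((RR Z).symm m).1 = m.2 := rfl
    have e2 : ((RR Z).symm m).2 = -m.1 := rfl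
    have e3 : (RR Z g).1 = -g.2 := rfl
    have e4 : (RR Z g).2 = g.1 := rfl
    rw [e3, e4] at this
    rw [e1, e2, hinner_neg_left, hinner_neg_right] at *
    linear_combination this

lemma adj_adj (K : Submodule ℂ ((Z → ℂ) × (Z → ℂ))) :
    adjSet (adjSet (K : Set ((Z → ℂ) × (Z → ℂ)))) = (K : Set ((Z → ℂ) × (Z → ℂ))) := by
  ext w
  rw [adjSet_eq_preimage (adjSet _), Set.mem_preimage, adjSet_eq_preimage,
    ← RRsymm_image_eq_preimage, mem_pperp_RRsymm_image, pperp_pperp]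
  have e : RR Z (RR Z w) = -w := by
    have : RR Z (RR Z w) = (-w.1, -w.2) := rfl
    rw [this]; rfl
  rw [e]
  simp

lemma pperp_sup (K L : Submodule ℂ ((X → ℂ) × (Y → ℂ))) :
    pperp ((K ⊔ L : Submodule ℂ ((X → ℂ) × (Y → ℂ))) : Set ((X → ℂ) × (Y → ℂ)))
      = pperp (K : Set ((X → ℂ) × (Y → ℂ))) ∩ pperp (L : Set ((X → ℂ) × (Y → ℂ))) := by
  ext g
  constructor
  · intro h
    constructor
    · intro f hf
      exact h f (Submodule.mem_sup_left hf)
    · intro f hf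
      exact h f (Submodule.mem_sup_right hf)
  · rintro ⟨h1, h2⟩ f hf
    rcases Submodule.mem_sup.mp hf with ⟨a, ha, b, hb, rfl⟩
    have := h1 a ha
    have h2' := h2 b hb
    simp only [Prod.fst_add, Prod.snd_add, hinner_add_left]
    linear_combination this + h2'

lemma adj_sup (K L : Submodule ℂ ((Z → ℂ) × (Z → ℂ))) :
    adjSet ((K ⊔ L : Submodule ℂ ((Z → ℂ) × (Z → ℂ))) : Set ((Z → ℂ) × (Z → ℂ)))
      = adjSet (K : Set ((Z → ℂ) × (Z → ℂ))) ∩ adjSet (L : Set ((Z → ℂ) × (Z → ℂ))) := by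
  rw [adjSet_eq_preimage, pperp_sup, Set.preimage_inter, ← adjSet_eq_preimage,
    ← adjSet_eq_preimage]

lemma adj_inf (K L : Submodule ℂ ((Z → ℂ) × (Z → ℂ))) :
    adjSet ((K ⊓ L : Submodule ℂ ((Z → ℂ) × (Z → ℂ))) : Set ((Z → ℂ) × (Z → ℂ)))
      = ((adjSub K ⊔ adjSub L : Submodule ℂ ((Z → ℂ) × (Z → ℂ))) :
          Set ((Z → ℂ) × (Z → ℂ))) := by
  have h1 : ((K ⊓ L : Submodule ℂ ((Z → ℂ) × (Z → ℂ))) : Set ((Z → ℂ) × (Z → ℂ)))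
      = adjSet ((adjSub K ⊔ adjSub L : Submodule ℂ ((Z → ℂ) × (Z → ℂ))) :
          Set ((Z → ℂ) × (Z → ℂ))) := by
    rw [adj_sup, coe_adjSub, coe_adjSub, adj_adj, adj_adj]
    rfl
  rw [h1, adj_adj]


/-! ### The coupling space -/

lemma hinner_split {X Y : Type*} [Fintype X] [Fintype Y] (a b : (X ⊕ Y) → ℂ) :
    hinner a b = hinner (a ∘ Sum.inl) (b ∘ Sum.inl) + hinner (a ∘ Sum.inr) (b ∘ Sum.inr) :=
  (hinner2_glE a b).symm

section Coupling

variable (S P : Type*) [Fintype S] [Fintype P]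
  (T : Submodule ℂ ((S → ℂ) × (P → ℂ))) (V : Submodule ℂ ((S → ℂ) × (S → ℂ)))

/-- T glued into single-function space -/
noncomputable def Tg : Submodule ℂ ((S ⊕ P) → ℂ) :=
  T.comap ((glE S P) : ((S ⊕ P) → ℂ) →ₗ[ℂ] ((S → ℂ) × (P → ℂ)))

/-- pperp T glued -/
noncomputable def Tpg : Submodule ℂ ((S ⊕ P) → ℂ) :=
  (pperpSub T).comap ((glE S P) : ((S ⊕ P) → ℂ) →ₗ[ℂ] ((S → ℂ) × (P → ℂ)))

lemma mem_Tg {v : (S ⊕ P) → ℂ} : v ∈ Tg S P T ↔ (v ∘ Sum.inl, v ∘ Sum.inr) ∈ T := Iff.rfl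

lemma mem_Tpg {i : (S ⊕ P) → ℂ} :
    i ∈ Tpg S P T ↔ (i ∘ Sum.inl, i ∘ Sum.inr) ∈ pperp (T : Set ((S → ℂ) × (P → ℂ))) :=
  Iff.rfl

lemma zperp_Tg : zperp ((Tg S P T : Submodule ℂ ((S ⊕ P) → ℂ)) : Set ((S ⊕ P) → ℂ))
    = ((Tpg S P T : Submodule ℂ ((S ⊕ P) → ℂ)) : Set ((S ⊕ P) → ℂ)) := by
  ext i
  simp only [SetLike.mem_coe, mem_Tpg]
  constructor
  · intro h p hp
    have : Sum.elim p.1 p.2 ∈ Tg S P T := by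
      rw [mem_Tg]
      exact hp
    have h2 := h _ this
    rw [hinner_split] at h2
    exact h2
  · intro h f hf
    have hf' : (f ∘ Sum.inl, f ∘ Sum.inr) ∈ T := hf
    have h2 := h _ hf'
    rw [hinner_split]
    exact h2

lemma zperp_Tpg : zperp ((Tpg S P T : Submodule ℂ ((S ⊕ P) → ℂ)) : Set ((S ⊕ P) → ℂ))
    = ((Tg S P T : Submodule ℂ ((S ⊕ P) → ℂ)) : Set ((S ⊕ P) → ℂ)) := by
  rw [← zperp_Tg S P T, zperp_zperp]

/-- coupling subspace -/
noncomputable def CC : Submodule ℂ (((S ⊕ P) → ℂ) × ((S ⊕ P) → ℂ)) :=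
  (Tg S P T).prod (Tpg S P T)

lemma adj_prod {Z : Type*} [Fintype Z] (M N : Submodule ℂ (Z → ℂ)) :
    adjSet ((M.prod N : Submodule ℂ ((Z → ℂ) × (Z → ℂ))) : Set ((Z → ℂ) × (Z → ℂ)))
      = (((zperpSub N).prod (zperpSub M) : Submodule ℂ ((Z → ℂ) × (Z → ℂ))) :
          Set ((Z → ℂ) × (Z → ℂ))) := by
  ext w
  rw [SetLike.mem_coe, Submodule.mem_prod, mem_adjSet]
  constructor
  · intro h
    constructor
    · intro i hi
      have := h (0, i) ⟨Submodule.zero_mem _, hi⟩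
      rw [this, hinner_zero_left]
    · intro v hv
      have := h (v, 0) ⟨hv, Submodule.zero_mem _⟩
      rw [← this, hinner_zero_left]
  · rintro ⟨hu, hj⟩ f hf
    rw [SetLike.mem_coe, Submodule.mem_prod] at hf
    rw [hu f.2 hf.2, hj f.1 hf.1]

lemma adj_CC : adjSet ((CC S P T : Submodule ℂ (((S ⊕ P) → ℂ) × ((S ⊕ P) → ℂ))) :
      Set (((S ⊕ P) → ℂ) × ((S ⊕ P) → ℂ)))
    = ((CC S P T : Submodule ℂ (((S ⊕ P) → ℂ) × ((S ⊕ P) → ℂ))) :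
      Set (((S ⊕ P) → ℂ) × ((S ⊕ P) → ℂ))) := by
  unfold CC
  rw [adj_prod]
  congr 1
  have h1 : zperpSub (Tpg S P T) = Tg S P T := by
    apply SetLike.coe_injective
    rw [coe_zperpSub, zperp_Tpg]
  have h2 : zperpSub (Tg S P T) = Tpg S P T := by
    apply SetLike.coe_injective
    rw [coe_zperpSub, zperp_Tg]
  rw [h1, h2]

/-- restriction to S-components -/
noncomputable def toS : (((S ⊕ P) → ℂ) × ((S ⊕ P) → ℂ)) →ₗ[ℂ] ((S → ℂ) × (S → ℂ)) where
  toFun w := (w.1 ∘ Sum.inl, w.2 ∘ Sum.inl)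
  map_add' a b := rfl
  map_smul' c a := rfl

/-- restriction to P-components -/
noncomputable def toP : (((S ⊕ P) → ℂ) × ((S ⊕ P) → ℂ)) →ₗ[ℂ] ((P → ℂ) × (P → ℂ)) where
  toFun w := (w.1 ∘ Sum.inr, w.2 ∘ Sum.inr)
  map_add' a b := rfl
  map_smul' c a := rfl

/-- V lifted -/
noncomputable def Vhat : Submodule ℂ (((S ⊕ P) → ℂ) × ((S ⊕ P) → ℂ)) :=
  V.comap (toS S P)

/-- the adjoint of Vhat, described explicitly -/
noncomputable def Ahat : Submodule ℂ (((S ⊕ P) → ℂ) × ((S ⊕ P) → ℂ)) :=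
  (adjSub V).comap (toS S P) ⊓ LinearMap.ker (toP S P)

lemma adj_Vhat :
    adjSet ((Vhat S P V : Submodule ℂ (((S ⊕ P) → ℂ) × ((S ⊕ P) → ℂ))) :
        Set (((S ⊕ P) → ℂ) × ((S ⊕ P) → ℂ)))
      = ((Ahat S P V : Submodule ℂ (((S ⊕ P) → ℂ) × ((S ⊕ P) → ℂ))) :
        Set (((S ⊕ P) → ℂ) × ((S ⊕ P) → ℂ))) := by
  ext w
  rw [SetLike.mem_coe, mem_adjSet]
  constructor
  · intro h
    have hkerP : w.1 ∘ Sum.inr = 0 ∧ w.2 ∘ Sum.inr = 0 := by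
      constructor
      · apply hinner_nondeg
        intro b
        have := h ((0 : (S ⊕ P) → ℂ), Sum.elim (0 : S → ℂ) b) (by
          show ((0 : (S ⊕ P) → ℂ) ∘ Sum.inl, (Sum.elim (0 : S → ℂ) b) ∘ Sum.inl) ∈ V
          exact V.zero_mem)
        rw [hinner_split] at this
        simp only [hinner_zero_left] at this
        have e1 : (Sum.elim (0 : S → ℂ) b) ∘ Sum.inl = (0 : S → ℂ) := rfl
        have e2 : (Sum.elim (0 : S → ℂ) b) ∘ Sum.inr = b := rfl
        rw [e1, e2, hinner_zero_left] at this
        linear_combination this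
      · apply hinner_nondeg
        intro b
        have := h (Sum.elim (0 : S → ℂ) b, (0 : (S ⊕ P) → ℂ)) (by
          show ((Sum.elim (0 : S → ℂ) b) ∘ Sum.inl, (0 : (S ⊕ P) → ℂ) ∘ Sum.inl) ∈ V
          exact V.zero_mem)
        rw [hinner_split (Sum.elim (0 : S → ℂ) b)] at this
        have e1 : (Sum.elim (0 : S → ℂ) b) ∘ Sum.inl = (0 : S → ℂ) := rfl
        have e2 : (Sum.elim (0 : S → ℂ) b) ∘ Sum.inr = b := rfl
        rw [e1, e2, hinner_zero_left, hinner_zero_left] at this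
        linear_combination -this
    have hadj : (w.1 ∘ Sum.inl, w.2 ∘ Sum.inl) ∈ adjSet (V : Set ((S → ℂ) × (S → ℂ))) := by
      rw [mem_adjSet]
      rintro ⟨vS, iS⟩ hf
      have := h (Sum.elim vS 0, Sum.elim iS 0) (by
        show ((Sum.elim vS 0) ∘ Sum.inl, (Sum.elim iS 0) ∘ Sum.inl) ∈ V
        exact hf)
      rw [hinner_split (Sum.elim iS 0), hinner_split (Sum.elim vS 0)] at this
      have e1 : (Sum.elim vS (0 : P → ℂ)) ∘ Sum.inl = vS := rfl
      have e2 : (Sum.elim vS (0 : P → ℂ)) ∘ Sum.inr = (0 : P → ℂ) := rfl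
      have e3 : (Sum.elim iS (0 : P → ℂ)) ∘ Sum.inl = iS := rfl
      have e4 : (Sum.elim iS (0 : P → ℂ)) ∘ Sum.inr = (0 : P → ℂ) := rfl
      rw [e1, e2, e3, e4, hinner_zero_left, hinner_zero_left] at this
      simpa using this
    refine Submodule.mem_inf.mpr ⟨?_, ?_⟩
    · exact hadj
    · rw [LinearMap.mem_ker]
      show (w.1 ∘ Sum.inr, w.2 ∘ Sum.inr) = (0, 0)
      rw [hkerP.1, hkerP.2]
  · intro hw f hf
    rcases Submodule.mem_inf.mp hw with ⟨h1, h2⟩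
    have hker : (w.1 ∘ Sum.inr, w.2 ∘ Sum.inr) = ((0 : P → ℂ), (0 : P → ℂ)) := h2
    have hadj : (w.1 ∘ Sum.inl, w.2 ∘ Sum.inl) ∈ adjSet (V : Set ((S → ℂ) × (S → ℂ))) := h1
    rw [mem_adjSet] at hadj
    have hfV : (f.1 ∘ Sum.inl, f.2 ∘ Sum.inl) ∈ V := hf
    have := hadj _ hfV
    rw [hinner_split f.2 w.1, hinner_split f.1 w.2]
    have k1 : w.1 ∘ Sum.inr = 0 := congrArg Prod.fst hker
    have k2 : w.2 ∘ Sum.inr = 0 := congrArg Prod.snd hker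
    rw [k1, k2, hinner_zero_right, hinner_zero_right, add_zero, add_zero]
    exact this

lemma main_identity :
    adjSet (((CC S P T ⊓ Vhat S P V : Submodule ℂ (((S ⊕ P) → ℂ) × ((S ⊕ P) → ℂ)))) :
        Set (((S ⊕ P) → ℂ) × ((S ⊕ P) → ℂ)))
      = (((CC S P T ⊔ Ahat S P V : Submodule ℂ (((S ⊕ P) → ℂ) × ((S ⊕ P) → ℂ)))) :
        Set (((S ⊕ P) → ℂ) × ((S ⊕ P) → ℂ))) := by
  rw [adj_inf]
  congr 1
  have h1 : adjSub (CC S P T) = CC S P T := SetLike.coe_injective (by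
    rw [coe_adjSub, adj_CC])
  have h2 : adjSub (Vhat S P V) = Ahat S P V := SetLike.coe_injective (by
    rw [coe_adjSub, adj_Vhat])
  rw [h1, h2]


/-- the test vector in the big space associated to a port pair -/
noncomputable def twv (w : (P → ℂ) × (P → ℂ)) : ((S ⊕ P) → ℂ) × ((S ⊕ P) → ℂ) :=
  (Sum.elim (0 : S → ℂ) (-w.1), Sum.elim (0 : S → ℂ) w.2)

lemma claim1 (w : (P → ℂ) × (P → ℂ)) :
    w ∈ adjSet (portB T (V : Set ((S → ℂ) × (S → ℂ))))
      ↔ twv S P w ∈ adjSet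
          (((CC S P T ⊓ Vhat S P V : Submodule ℂ (((S ⊕ P) → ℂ) × ((S ⊕ P) → ℂ)))) :
            Set (((S ⊕ P) → ℂ) × ((S ⊕ P) → ℂ))) := by
  rw [mem_adjSet, mem_adjSet]
  constructor
  · intro h f hf
    rw [SetLike.mem_coe, Submodule.mem_inf] at hf
    obtain ⟨hC, hV⟩ := hf
    rw [CC, Submodule.mem_prod] at hC
    have hT1 : (f.1 ∘ Sum.inl, f.1 ∘ Sum.inr) ∈ T := hC.1
    have hT2 : (f.2 ∘ Sum.inl, f.2 ∘ Sum.inr) ∈ pperp (T : Set ((S → ℂ) × (P → ℂ))) := hC.2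
    have hVm : (f.1 ∘ Sum.inl, f.2 ∘ Sum.inl) ∈ (V : Set ((S → ℂ) × (S → ℂ))) := hV
    have hu : (f.1 ∘ Sum.inr, -(f.2 ∘ Sum.inr)) ∈ portB T (V : Set ((S → ℂ) × (S → ℂ))) :=
      ⟨f.1 ∘ Sum.inl, f.2 ∘ Sum.inl, f.1 ∘ Sum.inr, f.2 ∘ Sum.inr, hVm, hT1, hT2, rfl⟩
    have key := h _ hu
    simp only [hinner_neg_left] at key
    rw [hinner_split f.2 (twv S P w).1, hinner_split f.1 (twv S P w).2]
    have e1 : (twv S P w).1 ∘ Sum.inl = (0 : S → ℂ) := rfl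
    have e2 : (twv S P w).1 ∘ Sum.inr = -w.1 := rfl
    have e3 : (twv S P w).2 ∘ Sum.inl = (0 : S → ℂ) := rfl
    have e4 : (twv S P w).2 ∘ Sum.inr = w.2 := rfl
    rw [e1, e2, e3, e4, hinner_zero_right, hinner_zero_right, hinner_neg_right]
    linear_combination key
  · rintro h u ⟨vS, iS, vP, iP, hV, hT1, hT2, rfl⟩
    have hf : (Sum.elim vS vP, Sum.elim iS iP)
        ∈ (((CC S P T ⊓ Vhat S P V : Submodule ℂ (((S ⊕ P) → ℂ) × ((S ⊕ P) → ℂ)))) :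
            Set (((S ⊕ P) → ℂ) × ((S ⊕ P) → ℂ))) := by
      rw [SetLike.mem_coe, Submodule.mem_inf]
      refine ⟨?_, ?_⟩
      · rw [CC, Submodule.mem_prod]
        exact ⟨hT1, hT2⟩
      · exact hV
    have key := h _ hf
    rw [hinner_split (Sum.elim iS iP) (twv S P w).1,
      hinner_split (Sum.elim vS vP) (twv S P w).2] at key
    have e1 : (twv S P w).1 ∘ Sum.inl = (0 : S → ℂ) := rfl
    have e2 : (twv S P w).1 ∘ Sum.inr = -w.1 := rfl
    have e3 : (twv S P w).2 ∘ Sum.inl = (0 : S → ℂ) := rfl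
    have e4 : (twv S P w).2 ∘ Sum.inr = w.2 := rfl
    have f1 : (Sum.elim iS iP) ∘ Sum.inl = iS := rfl
    have f2 : (Sum.elim iS iP) ∘ Sum.inr = iP := rfl
    have f3 : (Sum.elim vS vP) ∘ Sum.inl = vS := rfl
    have f4 : (Sum.elim vS vP) ∘ Sum.inr = vP := rfl
    rw [e1, e2, e3, e4, f1, f2, f3, f4, hinner_zero_right, hinner_zero_right,
      hinner_neg_right] at key
    show hinner (-iP) w.1 = hinner vP w.2
    rw [hinner_neg_left]
    linear_combination key

lemma claim2 (w : (P → ℂ) × (P → ℂ)) :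
    w ∈ portB T (adjSet (V : Set ((S → ℂ) × (S → ℂ))))
      ↔ twv S P w ∈
          (((CC S P T ⊔ Ahat S P V : Submodule ℂ (((S ⊕ P) → ℂ) × ((S ⊕ P) → ℂ)))) :
            Set (((S ⊕ P) → ℂ) × ((S ⊕ P) → ℂ))) := by
  constructor
  · rintro ⟨vS, iS, vP, iP, hadj, hT1, hT2, rfl⟩
    rw [SetLike.mem_coe, Submodule.mem_sup]
    refine ⟨(-(Sum.elim vS vP), -(Sum.elim iS iP)), ?_, (Sum.elim vS 0, Sum.elim iS 0), ?_, ?_⟩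
    · rw [CC, Submodule.mem_prod]
      constructor
      · show ((-(Sum.elim vS vP)) ∘ Sum.inl, (-(Sum.elim vS vP)) ∘ Sum.inr) ∈ T
        have e : ((-(Sum.elim vS vP)) ∘ Sum.inl, (-(Sum.elim vS vP)) ∘ Sum.inr)
            = -((vS, vP) : (S → ℂ) × (P → ℂ)) := rfl
        rw [e]
        exact T.neg_mem hT1
      · show ((-(Sum.elim iS iP)) ∘ Sum.inl, (-(Sum.elim iS iP)) ∘ Sum.inr)
            ∈ pperp (T : Set ((S → ℂ) × (P → ℂ)))
        have e : ((-(Sum.elim iS iP)) ∘ Sum.inl, (-(Sum.elim iS iP)) ∘ Sum.inr)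
            = -((iS, iP) : (S → ℂ) × (P → ℂ)) := rfl
        rw [e]
        exact (pperpSub T).neg_mem hT2
    · rw [Ahat, Submodule.mem_inf]
      constructor
      · exact hadj
      · rw [LinearMap.mem_ker]
        rfl
    · have h1 : -(Sum.elim vS vP) + Sum.elim vS 0 = Sum.elim (0 : S → ℂ) (-vP) := by
        funext x
        cases x with
        | inl a => simp
        | inr b => simp
      have h2 : -(Sum.elim iS iP) + Sum.elim iS 0 = Sum.elim (0 : S → ℂ) (-iP) := by
        funext x
        cases x with
        | inl a => simp
        | inr b => simp
      show (-(Sum.elim vS vP) + Sum.elim vS 0, -(Sum.elim iS iP) + Sum.elim iS 0) = twv S P _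
      rw [h1, h2]
      rfl
  · intro h
    rcases Submodule.mem_sup.mp h with ⟨c, hc, a, ha, hsum⟩
    rw [CC, Submodule.mem_prod] at hc
    have hT1 : (c.1 ∘ Sum.inl, c.1 ∘ Sum.inr) ∈ T := hc.1
    have hT2 : (c.2 ∘ Sum.inl, c.2 ∘ Sum.inr) ∈ pperp (T : Set ((S → ℂ) × (P → ℂ))) := hc.2
    rw [Ahat, Submodule.mem_inf] at ha
    have hadj : (a.1 ∘ Sum.inl, a.2 ∘ Sum.inl) ∈ adjSet (V : Set ((S → ℂ) × (S → ℂ))) := ha.1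
    have hker : (a.1 ∘ Sum.inr, a.2 ∘ Sum.inr) = ((0 : P → ℂ), (0 : P → ℂ)) := ha.2
    have ka1 : a.1 ∘ Sum.inr = 0 := congrArg Prod.fst hker
    have ka2 : a.2 ∘ Sum.inr = 0 := congrArg Prod.snd hker
    have hfst : c.1 + a.1 = Sum.elim (0 : S → ℂ) (-w.1) := congrArg Prod.fst hsum
    have hsnd : c.2 + a.2 = Sum.elim (0 : S → ℂ) w.2 := congrArg Prod.snd hsum
    have c1r : c.1 ∘ Sum.inr = -w.1 := by
      funext p
      have h0 := congrFun hfst (Sum.inr p)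
      have h1 := congrFun ka1 p
      simp only [Pi.add_apply, Sum.elim_inr, Function.comp_apply, Pi.neg_apply,
        Pi.zero_apply] at h0 h1 ⊢
      linear_combination h0 - h1
    have c2r : c.2 ∘ Sum.inr = w.2 := by
      funext p
      have h0 := congrFun hsnd (Sum.inr p)
      have h1 := congrFun ka2 p
      simp only [Pi.add_apply, Sum.elim_inr, Function.comp_apply, Pi.neg_apply,
        Pi.zero_apply] at h0 h1 ⊢
      linear_combination h0 - h1
    have c1l : c.1 ∘ Sum.inl = -(a.1 ∘ Sum.inl) := by
      funext p
      have h0 := congrFun hfst (Sum.inl p)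
      simp only [Pi.add_apply, Sum.elim_inl, Function.comp_apply, Pi.neg_apply,
        Pi.zero_apply] at h0 ⊢
      linear_combination h0
    have c2l : c.2 ∘ Sum.inl = -(a.2 ∘ Sum.inl) := by
      funext p
      have h0 := congrFun hsnd (Sum.inl p)
      simp only [Pi.add_apply, Sum.elim_inl, Function.comp_apply, Pi.neg_apply,
        Pi.zero_apply] at h0 ⊢
      linear_combination h0
    refine ⟨a.1 ∘ Sum.inl, a.2 ∘ Sum.inl, w.1, -w.2, hadj, ?_, ?_, ?_⟩
    · have e : ((a.1 ∘ Sum.inl, w.1) : (S → ℂ) × (P → ℂ))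
          = -((c.1 ∘ Sum.inl, c.1 ∘ Sum.inr) : (S → ℂ) × (P → ℂ)) := by
        rw [c1l, c1r]
        simp
      rw [e]
      exact T.neg_mem hT1
    · have e : ((a.2 ∘ Sum.inl, -w.2) : (S → ℂ) × (P → ℂ))
          = -((c.2 ∘ Sum.inl, c.2 ∘ Sum.inr) : (S → ℂ) × (P → ℂ)) := by
        rw [c2l, c2r]
        simp
      rw [e]
      exact (pperpSub T).neg_mem hT2
    · simp

end Coupling

end S8


theorem statement8 (S P : Type*) [Fintype S] [Fintype P]
    (T : Submodule ℂ ((S → ℂ) × (P → ℂ)))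
    (V : Submodule ℂ ((S → ℂ) × (S → ℂ)))
    (A : Set ((S → ℂ) × (S → ℂ))) (x : (S → ℂ) × (S → ℂ))
    (hA : A = (x + ·) '' (V : Set ((S → ℂ) × (S → ℂ))))
    (hne : (portB T A).Nonempty) :
    portB T (adjSet (V : Set ((S → ℂ) × (S → ℂ))))
      = adjSet (portB T (V : Set ((S → ℂ) × (S → ℂ)))) := by
  ext w
  have h2 := S8.claim2 S P T V w
  have h1 := S8.claim1 S P T V w
  rw [← S8.main_identity S P T V] at h2
  exact h2.trans h1.symm
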